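/- For all integers q ≥ 2, x ≥ 1, and m ≥ x+2, the number of admissible words of length m whose leftmost symbol equals q−1 and whose next x+1 symbols (positions m−2 down to m−x−2) are each at most q−2 equals (q−1)^{x+1}·N_q(m−x−2,x). -/

import Mathlib

/-- A word `w` of length `m` over the alphabet `{0, ..., q-1}` (with `w ⟨m-1,_⟩` the
leftmost/most significant symbol) is admissible for the `Q^q_x` constraint if it contains
no forbidden pattern `(q-1) δ^r (q-1)` with `1 ≤ r ≤ x` and each symbol of `δ^r` at most `q-2`. -/
def IsAdmissible (q x m : ℕ) (w : Fin m → Fin q) : Prop :=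
  ∀ (i r : ℕ) (_hr1 : 1 ≤ r) (_hr2 : r ≤ x) (h : i + r + 1 < m),
    ¬((w ⟨i + r + 1, h⟩ : ℕ) = q - 1 ∧
      (w ⟨i, by omega⟩ : ℕ) = q - 1 ∧
      ∀ (j : ℕ) (_hj1 : 1 ≤ j) (_hj2 : j ≤ r), (w ⟨i + j, by omega⟩ : ℕ) ≤ q - 2)

/-- `Nadm q x m` is the number of admissible words of length `m`. -/
noncomputable def Nadm (q x m : ℕ) : ℕ :=
  Nat.card {w : Fin m → Fin q // IsAdmissible q x m w}

/-- Lexicographic comparison of words of equal length: `w < w'` iff at the highest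
index where they differ `w` has the smaller symbol. -/
def LexLt {q m : ℕ} (w w' : Fin m → Fin q) : Prop :=
  ∃ i : Fin m, w i < w' i ∧ ∀ j : Fin m, i < j → w j = w' j

/-- The lexicographic rank of a word among admissible words of its length. -/
noncomputable def rankOf (q x m : ℕ) (w : Fin m → Fin q) : ℕ :=
  Nat.card {v : Fin m → Fin q // IsAdmissible q x m v ∧ LexLt v w}

/-- counting admissible words whose leftmost symbol is `q-1` and whose
next `x+1` symbols (positions `m-2` down to `m-x-2`) are each at most `q-2`. -/
lemma wcong {q m : ℕ} (w : Fin m → Fin q) {a b : ℕ} (ha : a < m) (hb : b < m)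
    (hab : a = b) : w ⟨a, ha⟩ = w ⟨b, hb⟩ := by subst hab; rfl

lemma adm_restrict (q x m m' : ℕ) (hm' : m' ≤ m) (w : Fin m → Fin q)
    (hw : IsAdmissible q x m w) :
    IsAdmissible q x m' (fun i : Fin m' => w ⟨i, by omega⟩) := by
  intro i r hr1 hr2 h hpat
  obtain ⟨h1, h2, h3⟩ := hpat
  exact hw i r hr1 hr2 (by omega) ⟨h1, h2, fun j hj1 hj2 => h3 j hj1 hj2⟩

def mkWord (q x m : ℕ) (hq : 2 ≤ q) (hm : x + 2 ≤ m)
    (u : Fin (m - x - 2) → Fin q) (d : Fin (x + 1) → Fin (q - 1)) : Fin m → Fin q :=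
  fun k =>
    if h : (k : ℕ) < m - x - 2 then u ⟨k, h⟩
    else if h2 : (k : ℕ) < m - 1 then
      Fin.castLE (by omega) (d ⟨(k : ℕ) - (m - x - 2), by omega⟩)
    else ⟨q - 1, by omega⟩

lemma mkWord_lo (q x m : ℕ) (hq : 2 ≤ q) (hm : x + 2 ≤ m) (u d) (a : ℕ) (ha : a < m)
    (ha' : a < m - x - 2) : mkWord q x m hq hm u d ⟨a, ha⟩ = u ⟨a, ha'⟩ := by
  simp only [mkWord, dif_pos ha']

lemma mkWord_mid (q x m : ℕ) (hq : 2 ≤ q) (hm : x + 2 ≤ m) (u d) (a : ℕ) (ha : a < m)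
    (ha1 : ¬ a < m - x - 2) (ha2 : a < m - 1) :
    (mkWord q x m hq hm u d ⟨a, ha⟩ : ℕ) = (d ⟨a - (m - x - 2), by omega⟩ : ℕ) := by
  simp only [mkWord, dif_neg ha1, dif_pos ha2, Fin.coe_castLE]

lemma mkWord_hi (q x m : ℕ) (hq : 2 ≤ q) (hm : x + 2 ≤ m) (u d) (a : ℕ) (ha : a < m)
    (ha2 : ¬ a < m - 1) :
    (mkWord q x m hq hm u d ⟨a, ha⟩ : ℕ) = q - 1 := by
  simp only [mkWord, dif_neg (by omega : ¬ a < m - x - 2), dif_neg ha2]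

lemma mkWord_adm (q x m : ℕ) (hq : 2 ≤ q) (hm : x + 2 ≤ m) (u d)
    (hu : IsAdmissible q x (m - x - 2) u) :
    IsAdmissible q x m (mkWord q x m hq hm u d) := by
  intro i r hr1 hr2 h hpat
  obtain ⟨h1, h2, h3⟩ := hpat
  by_cases hp : i + r + 1 < m - x - 2
  · refine hu i r hr1 hr2 hp ⟨?_, ?_, ?_⟩
    · rw [← mkWord_lo q x m hq hm u d (i+r+1) h hp]; exact h1
    · rw [← mkWord_lo q x m hq hm u d i (by omega) (by omega)]; exact h2
    · intro j hj1 hj2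
      rw [← mkWord_lo q x m hq hm u d (i+j) (by omega) (by omega)]
      exact h3 j hj1 hj2
  · by_cases hp2 : i + r + 1 < m - 1
    · have := mkWord_mid q x m hq hm u d (i+r+1) h hp hp2
      have hd := (d ⟨i + r + 1 - (m - x - 2), by omega⟩).isLt
      omega
    · have hi1 : ¬ i < m - x - 2 := by omega
      have hi2 : i < m - 1 := by omega
      have := mkWord_mid q x m hq hm u d i (by omega) hi1 hi2
      have hd := (d ⟨i - (m - x - 2), by omega⟩).isLt
      omega

-- the special property
def SpecP (q x m : ℕ) (hq : 2 ≤ q) (hx : 1 ≤ x) (hm : x + 2 ≤ m) (w : Fin m → Fin q) : Prop :=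
  IsAdmissible q x m w ∧ (w ⟨m - 1, Nat.sub_lt (by omega) Nat.one_pos⟩ : ℕ) = q - 1 ∧
    ∀ (j : ℕ) (_hj1 : 1 ≤ j) (_hj2 : j ≤ x + 1),
      (w ⟨m - 1 - j, Nat.lt_of_le_of_lt (Nat.sub_le _ _) (Nat.sub_lt (by omega) Nat.one_pos)⟩ : ℕ) ≤ q - 2

lemma midBound (q x m : ℕ) (hq : 2 ≤ q) (hx : 1 ≤ x) (hm : x + 2 ≤ m)
    (w : Fin m → Fin q) (hw : SpecP q x m hq hx hm w) (j : Fin (x + 1)) :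
    (w ⟨m - x - 2 + (j : ℕ), by omega⟩ : ℕ) < q - 1 := by
  have hj := hw.2.2 (x + 1 - (j : ℕ)) (by omega) (by omega)
  have heq : w ⟨m - 1 - (x + 1 - (j : ℕ)), by omega⟩ =
      w ⟨m - x - 2 + (j : ℕ), by omega⟩ := wcong _ _ _ (by omega)
  rw [heq] at hj
  omega

def fwd (q x m : ℕ) (hq : 2 ≤ q) (hx : 1 ≤ x) (hm : x + 2 ≤ m)
    (w : {w : Fin m → Fin q // SpecP q x m hq hx hm w}) :
    {u : Fin (m - x - 2) → Fin q // IsAdmissible q x (m - x - 2) u} ×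
      (Fin (x + 1) → Fin (q - 1)) :=
  (⟨fun i => w.1 ⟨i, by omega⟩, adm_restrict q x m (m - x - 2) (by omega) w.1 w.2.1⟩,
   fun j => ⟨(w.1 ⟨m - x - 2 + (j : ℕ), by omega⟩ : ℕ), midBound q x m hq hx hm w.1 w.2 j⟩)

def bwd (q x m : ℕ) (hq : 2 ≤ q) (hx : 1 ≤ x) (hm : x + 2 ≤ m)
    (p : {u : Fin (m - x - 2) → Fin q // IsAdmissible q x (m - x - 2) u} ×
      (Fin (x + 1) → Fin (q - 1))) :
    {w : Fin m → Fin q // SpecP q x m hq hx hm w} := by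
  refine ⟨mkWord q x m hq hm p.1.1 p.2,
    mkWord_adm q x m hq hm p.1.1 p.2 p.1.2, ?_, ?_⟩
  · exact mkWord_hi q x m hq hm p.1.1 p.2 (m - 1) (Nat.sub_lt (by omega) Nat.one_pos) (by omega)
  · intro j hj1 hj2
    have h1 : ¬ m - 1 - j < m - x - 2 := by omega
    have h2 : m - 1 - j < m - 1 := by omega
    have := mkWord_mid q x m hq hm p.1.1 p.2 (m - 1 - j) (by omega) h1 h2
    have hd := (p.2 ⟨m - 1 - j - (m - x - 2), by omega⟩).isLt
    omega

lemma bwd_fwd (q x m : ℕ) (hq : 2 ≤ q) (hx : 1 ≤ x) (hm : x + 2 ≤ m)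
    (w : {w : Fin m → Fin q // SpecP q x m hq hx hm w}) :
    bwd q x m hq hx hm (fwd q x m hq hx hm w) = w := by
  apply Subtype.ext
  funext k
  show mkWord q x m hq hm _ _ k = w.1 k
  by_cases h1 : (k : ℕ) < m - x - 2
  · rw [show k = (⟨(k : ℕ), k.isLt⟩ : Fin m) from rfl,
      mkWord_lo q x m hq hm _ _ k k.isLt h1]
    exact wcong w.1 _ _ rfl
  · by_cases h2 : (k : ℕ) < m - 1
    · apply Fin.ext
      rw [show k = (⟨(k : ℕ), k.isLt⟩ : Fin m) from rfl,
        mkWord_mid q x m hq hm _ _ k k.isLt h1 h2]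
      show (w.1 ⟨m - x - 2 + ((k : ℕ) - (m - x - 2)), by omega⟩ : ℕ) = _
      exact congrArg Fin.val (wcong w.1 _ _ (by omega))
    · apply Fin.ext
      rw [show k = (⟨(k : ℕ), k.isLt⟩ : Fin m) from rfl,
        mkWord_hi q x m hq hm _ _ k k.isLt h2]
      have := congrArg Fin.val (wcong w.1 (a := m - 1) (b := (k : ℕ)) (by omega) k.isLt (by omega))
      rw [← this]
      exact (w.2.2.1).symm

lemma fwd_bwd (q x m : ℕ) (hq : 2 ≤ q) (hx : 1 ≤ x) (hm : x + 2 ≤ m)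
    (p : {u : Fin (m - x - 2) → Fin q // IsAdmissible q x (m - x - 2) u} ×
      (Fin (x + 1) → Fin (q - 1))) :
    fwd q x m hq hx hm (bwd q x m hq hx hm p) = p := by
  obtain ⟨⟨u, hu⟩, d⟩ := p
  refine Prod.ext ?_ ?_
  · apply Subtype.ext
    funext i
    show mkWord q x m hq hm u d ⟨i, _⟩ = u i
    rw [mkWord_lo q x m hq hm u d i (by omega) i.isLt]
  · funext j
    apply Fin.ext
    show (mkWord q x m hq hm u d ⟨m - x - 2 + (j : ℕ), _⟩ : ℕ) = (d j : ℕ)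
    have h1 : ¬ m - x - 2 + (j : ℕ) < m - x - 2 := by omega
    have h2 : m - x - 2 + (j : ℕ) < m - 1 := by omega
    rw [mkWord_mid q x m hq hm u d (m - x - 2 + (j : ℕ)) (by omega) h1 h2]
    exact congrArg (fun t => (d t : ℕ)) (Fin.ext (by simp))

theorem stmt_4 (q x m : ℕ) (hq : 2 ≤ q) (hx : 1 ≤ x) (hm : x + 2 ≤ m) :
    Nat.card {w : Fin m → Fin q //
        IsAdmissible q x m w ∧ (w ⟨m - 1, by omega⟩ : ℕ) = q - 1 ∧
          ∀ (j : ℕ) (_hj1 : 1 ≤ j) (_hj2 : j ≤ x + 1),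
            (w ⟨m - 1 - j, by omega⟩ : ℕ) ≤ q - 2} =
      (q - 1) ^ (x + 1) * Nadm q x (m - x - 2) := by
  have e : {w : Fin m → Fin q // SpecP q x m hq hx hm w} ≃
      ({u : Fin (m - x - 2) → Fin q // IsAdmissible q x (m - x - 2) u} ×
        (Fin (x + 1) → Fin (q - 1))) :=
    ⟨fwd q x m hq hx hm, bwd q x m hq hx hm, bwd_fwd q x m hq hx hm, fwd_bwd q x m hq hx hm⟩
  have : Nat.card {w : Fin m → Fin q // SpecP q x m hq hx hm w} =
      (q - 1) ^ (x + 1) * Nadm q x (m - x - 2) := by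
    rw [Nat.card_congr e, Nat.card_prod,
      Nat.card_eq_fintype_card (α := Fin (x+1) → Fin (q-1))]
    simp only [Fintype.card_fun, Fintype.card_fin]
    rw [Nadm, Nat.mul_comm]
  exact this
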